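/- Let f : [a,b] × (c,d) → ℝ be continuous with f(x, S) < 0 for all x when S ≥ 1/δ and f(x, S) > 0 for all x when S ≤ δ (for some 0 < δ < 1/δ < ∞ with [δ, 1/δ] ⊂ (c,d)). Then there exists a connected subset 𝒞 of the zero set of f in [a,b] × (δ, 1/δ) meeting both {a} × (δ, 1/δ) and {b} × (δ, 1/δ). -/

import Mathlib

open Set Complex


lemma aux_int_subsingleton {J : Set ℝ} (hJ : IsPreconnected J)
    (h : ∀ x ∈ J, ∃ n : ℤ, x = n) : J.Subsingleton := by
  have key : ∀ x ∈ J, ∀ y ∈ J, x < y → False := by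
    intro x hx y hy hlt
    obtain ⟨m, rfl⟩ := h x hx
    obtain ⟨k, rfl⟩ := h y hy
    have hmk : m < k := by exact_mod_cast hlt
    have hmk' : (m : ℝ) + 1 ≤ k := by exact_mod_cast hmk
    have ht : (m : ℝ) + 1/2 ∈ Icc (m : ℝ) (k : ℝ) := ⟨by linarith, by linarith⟩
    obtain ⟨j, hj⟩ := h _ (hJ.Icc_subset hx hy ht)
    have h2 : (2 * j : ℤ) = 2 * m + 1 := by
      have : 2 * (j : ℝ) = 2 * m + 1 := by linarith
      exact_mod_cast this
    omega
  intro x hx y hy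
  rcases lt_trichotomy x y with hlt | heq | hlt
  · exact absurd (key x hx y hy hlt) (by simp)
  · exact heq
  · exact absurd (key y hy x hx hlt) (by simp)

open scoped Classical in
lemma aux_glue {X Y : Type*} [TopologicalSpace X] [TopologicalSpace Y] {φ ψ : X → Y}
    {A B : Set X} (hA : IsClosed A) (hB : IsClosed B)
    (hφ : Continuous φ) (hψ : Continuous ψ) (heq : EqOn φ ψ (A ∩ B)) :
    ContinuousOn (fun p => if p ∈ A then φ p else ψ p) (A ∪ B) := by
  intro x hx
  set h : X → Y := fun p => if p ∈ A then φ p else ψ p with hh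
  have hhA : ∀ y ∈ A, h y = φ y := fun y hy => if_pos hy
  have hhB : ∀ y ∈ B, h y = ψ y := by
    intro y hy
    by_cases hyA : y ∈ A
    · simp only [hh, if_pos hyA]; exact heq ⟨hyA, hy⟩
    · simp only [hh, if_neg hyA]
  apply ContinuousWithinAt.union
  · by_cases hxA : x ∈ A
    · exact ((hφ.continuousAt).continuousWithinAt).congr hhA (hhA x hxA)
    · exact continuousWithinAt_of_notMem_closure (by rwa [hA.closure_eq])
  · by_cases hxB : x ∈ B
    · exact ((hψ.continuousAt).continuousWithinAt).congr hhB (hhB x hxB)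
    · exact continuousWithinAt_of_notMem_closure (by rwa [hB.closure_eq])


lemma aux_log {R : Set (ℝ × ℝ)} (hconv : Convex ℝ R) (hcomp : IsCompact R)
    {x₀ : ℝ × ℝ} (hx₀ : x₀ ∈ R) {h : ℝ × ℝ → ℂ} (hh : ContinuousOn h R)
    (hz : ∀ p ∈ R, h p ≠ 0) :
    ∃ H : ℝ × ℝ → ℂ, ContinuousOn H R ∧ ∀ p ∈ R, Complex.exp (H p) = h p := by
  -- minimum of ‖h‖
  obtain ⟨pm, hpm, hmin⟩ := hcomp.exists_isMinOn ⟨x₀, hx₀⟩ (hh.norm)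
  set m : ℝ := ‖h pm‖ with hm
  have hm0 : 0 < m := norm_pos_iff.mpr (hz pm hpm)
  -- uniform continuity
  have huc := (hcomp.uniformContinuousOn_of_continuous hh)
  rw [Metric.uniformContinuousOn_iff] at huc
  obtain ⟨δ₀, hδ₀, hucd⟩ := huc m hm0
  -- bound
  obtain ⟨r, hr⟩ := hcomp.isBounded.subset_ball x₀
  have hr0 : 0 < r := by
    have := hr hx₀; simpa using Metric.pos_of_mem_ball this
  obtain ⟨n, hn⟩ := exists_nat_gt (r / δ₀)
  have hn0 : 0 < (n : ℝ) := lt_trans (by positivity) hn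
  -- the chain of points
  set c : ℕ → (ℝ × ℝ) → (ℝ × ℝ) := fun k x => x₀ + ((k : ℝ) / n) • (x - x₀) with hc
  have hcmem : ∀ x ∈ R, ∀ k ≤ n, c k x ∈ R := by
    intro x hx k hk
    have ht0 : (0:ℝ) ≤ (k : ℝ) / n := by positivity
    have ht1 : (k : ℝ) / n ≤ 1 := by
      rw [div_le_one hn0]; exact_mod_cast hk
    have := hconv hx₀ hx (by linarith : (0:ℝ) ≤ 1 - (k:ℝ)/n) ht0 (by ring)
    convert this using 1
    simp only [hc]
    module
  have hcdist : ∀ x ∈ R, ∀ k j : ℕ, dist (c k x) (c j x) = |((k:ℝ) - j)| / n * dist x x₀ := by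
    intro x hx k j
    have heq : c k x - c j x = (((k:ℝ) - j) / n) • (x - x₀) := by
      simp only [hc]; module
    rw [dist_eq_norm, heq, norm_smul, Real.norm_eq_abs, abs_div, abs_of_pos hn0,
      dist_eq_norm]
    try ring
  have hstep : ∀ x ∈ R, ∀ k : ℕ, dist (c (k+1) x) (c k x) < δ₀ := by
    intro x hx k
    rw [hcdist x hx (k+1) k]
    have h1 : |((k:ℝ)+1 - k)| = 1 := by norm_num
    have hxd : dist x x₀ < r := by simpa [Metric.mem_ball] using hr hx
    have : (1:ℝ)/n * dist x x₀ < 1/n * r := by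
      apply mul_lt_mul_of_pos_left hxd (by positivity)
    have heq1 : |(((k+1:ℕ)):ℝ) - (k:ℕ)| = 1 := by push_cast; norm_num
    rw [heq1]
    have hfin : (1:ℝ)/n * r ≤ δ₀ := by
      rw [div_mul_eq_mul_div, one_mul, div_le_iff₀ hn0]
      rw [div_lt_iff₀ hδ₀] at hn
      nlinarith
    calc (1:ℝ) / n * dist x x₀ < 1/n * r := this
      _ ≤ δ₀ := hfin
  have hne : ∀ x ∈ R, ∀ k ≤ n, h (c k x) ≠ 0 := fun x hx k hk => hz _ (hcmem x hx k hk)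
  have hratio : ∀ x ∈ R, ∀ k, k < n →
      (h (c (k+1) x) / h (c k x)) ∈ Complex.slitPlane ∧ h (c (k+1) x) / h (c k x) ≠ 0 := by
    intro x hx k hk
    have hk1 : k + 1 ≤ n := hk
    have hk0 : k ≤ n := le_of_lt hk
    have hd : ‖h (c (k+1) x) - h (c k x)‖ < m := by
      have := hucd (c (k+1) x) (hcmem x hx _ hk1) (c k x) (hcmem x hx _ hk0) (hstep x hx k)
      rwa [dist_eq_norm] at this
    set u := h (c (k+1) x) with hu
    set v := h (c k x) with hv
    have hvne : v ≠ 0 := hne x hx k hk0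
    have hune : u ≠ 0 := hne x hx (k+1) hk1
    have hmv : m ≤ ‖v‖ := hmin (hcmem x hx k hk0)
    have hvpos : 0 < ‖v‖ := lt_of_lt_of_le hm0 hmv
    have h1 : ‖u / v - 1‖ < 1 := by
      rw [show u / v - 1 = (u - v) / v by field_simp, norm_div, div_lt_one hvpos]
      exact lt_of_lt_of_le hd hmv
    have h2 : |(u/v - 1).re| ≤ ‖u/v - 1‖ := by
      exact Complex.abs_re_le_norm _
    have h3 : (u/v - 1).re = (u/v).re - 1 := by simp
    refine ⟨Or.inl ?_, div_ne_zero hune hvne⟩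
    have := abs_lt.mp (lt_of_le_of_lt h2 h1)
    rw [h3] at this
    linarith [this.1]
  refine ⟨fun x => Complex.log (h x₀) +
      ∑ k ∈ Finset.range n, Complex.log (h (c (k+1) x) / h (c k x)), ?_, ?_⟩
  · apply ContinuousOn.add continuousOn_const
    apply continuousOn_finset_sum
    intro k hk
    have hkn : k < n := Finset.mem_range.mp hk
    have hck : ∀ j, j ≤ n → ContinuousOn (fun x => h (c j x)) R := by
      intro j hj
      apply hh.comp
      · have : Continuous (fun x : ℝ × ℝ => x₀ + ((j : ℝ) / n) • (x - x₀)) := by fun_prop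
        exact this.continuousOn
      · exact fun x hx => hcmem x hx j hj
    apply ContinuousOn.clog
    · exact (hck (k+1) hkn).div (hck k (le_of_lt hkn)) (fun x hx => hne x hx k (le_of_lt hkn))
    · exact fun x hx => (hratio x hx k hkn).1
  · intro x hx
    have key : ∀ j, j ≤ n → Complex.exp (Complex.log (h x₀) +
        ∑ k ∈ Finset.range j, Complex.log (h (c (k+1) x) / h (c k x))) = h (c j x) := by
      intro j
      induction j with
      | zero =>
        intro _
        have : c 0 x = x₀ := by simp [hc]
        rw [this]
        simp [Complex.exp_log (hz x₀ hx₀)]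
      | succ j ih =>
        intro hj
        have hj' : j ≤ n := Nat.le_of_succ_le hj
        have hjn : j < n := hj
        rw [Finset.sum_range_succ, ← add_assoc, Complex.exp_add, ih hj',
          Complex.exp_log (hratio x hx j hjn).2]
        rw [mul_div_assoc', mul_div_cancel_left₀ _ (hne x hx j hj')]
    have hcn : c n x = x := by
      simp only [hc]
      rw [div_self (ne_of_gt hn0), one_smul]
      abel
    have := key n le_rfl
    rwa [hcn] at this


lemma aux_relopen_component {R U O : Set (ℝ × ℝ)} (hconv : Convex ℝ R) (hO : IsOpen O)
    (hU : U = R ∩ O) (x : ℝ × ℝ) :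
    ∃ O' : Set (ℝ × ℝ), IsOpen O' ∧ connectedComponentIn U x = R ∩ O' := by
  set C := connectedComponentIn U x with hC
  have claim : ∀ y ∈ C, ∃ ε : ℝ, 0 < ε ∧ R ∩ Metric.ball y ε ⊆ C := by
    intro y hy
    have hyU : y ∈ U := connectedComponentIn_subset _ _ hy
    rw [hU] at hyU
    obtain ⟨ε, hε, hball⟩ := Metric.isOpen_iff.mp hO y hyU.2
    refine ⟨ε, hε, ?_⟩
    have hW : Convex ℝ (R ∩ Metric.ball y ε) := hconv.inter (convex_ball y ε)
    have hWU : R ∩ Metric.ball y ε ⊆ U := by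
      rw [hU]; exact inter_subset_inter_right _ hball
    have hyW : y ∈ R ∩ Metric.ball y ε := ⟨hyU.1, Metric.mem_ball_self hε⟩
    have h2 := hW.isPreconnected.subset_connectedComponentIn hyW hWU
    have heq : connectedComponentIn U x = connectedComponentIn U y :=
      connectedComponentIn_eq (x := x) (y := y) (F := U) hy
    rw [hC, heq]
    exact h2
  choose ε hεpos hεsub using claim
  refine ⟨⋃ (y : ℝ × ℝ) (hy : y ∈ C), Metric.ball y (ε y hy),
    isOpen_iUnion fun y => isOpen_iUnion fun _ => Metric.isOpen_ball, ?_⟩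
  apply Subset.antisymm
  · intro z hz
    have hzR : z ∈ R := by
      have := connectedComponentIn_subset U x hz
      rw [hU] at this; exact this.1
    exact ⟨hzR, mem_iUnion.mpr ⟨z, mem_iUnion.mpr ⟨hz, Metric.mem_ball_self (hεpos z hz)⟩⟩⟩
  · rintro z ⟨hzR, hz⟩
    simp only [mem_iUnion] at hz
    obtain ⟨y, hy, hzball⟩ := hz
    exact hεsub y hy ⟨hzR, hzball⟩

lemma aux_clopen {R D O : Set (ℝ × ℝ)} (hR : IsPreconnected R) (hO : IsOpen O)
    (hD : D = R ∩ O) (hDc : IsClosed D) (h1 : D.Nonempty) (h2 : (R \ D).Nonempty) : False := by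
  obtain ⟨z, hzR, hzD⟩ := h2
  obtain ⟨d, hd⟩ := h1
  have hdRO : d ∈ R ∩ O := hD ▸ hd
  obtain ⟨w, hwR, hwO, hwD⟩ := hR O Dᶜ hO hDc.isOpen_compl
    (fun p hp => by
      by_cases hpD : p ∈ D
      · exact Or.inl (hD ▸ hpD : p ∈ R ∩ O).2
      · exact Or.inr hpD)
    ⟨d, hdRO.1, hdRO.2⟩ ⟨z, hzR, hzD⟩
  exact hwD (hD ▸ (⟨hwR, hwO⟩ : w ∈ R ∩ O))


open scoped Classical in
lemma aux_unicoherence {R A B : Set (ℝ × ℝ)} (hconv : Convex ℝ R) (hcomp : IsCompact R)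
    (hA : IsClosed A) (hB : IsClosed B) (hAc : IsPreconnected A) (hBc : IsPreconnected B)
    (hABR : A ∪ B = R) : IsPreconnected (A ∩ B) := by
  by_contra hnc
  rw [IsPreconnected] at hnc
  push_neg at hnc
  obtain ⟨u, v, hu, hv, hcover, hne1, hne2, hempty⟩ := hnc
  set s := A ∩ B with hs
  have hAR : A ⊆ R := hABR ▸ subset_union_left
  have hBR : B ⊆ R := hABR ▸ subset_union_right
  have hsclosed : IsClosed s := hA.inter hB
  set F := s \ v with hF
  set G := s \ u with hG
  have hFclosed : IsClosed F := hsclosed.sdiff hv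
  have hGclosed : IsClosed G := hsclosed.sdiff hu
  have hsubF : s ∩ u ⊆ F := by
    intro p hp
    refine ⟨hp.1, fun hpv => ?_⟩
    have : p ∈ s ∩ (u ∩ v) := ⟨hp.1, hp.2, hpv⟩
    rw [hempty] at this; exact this
  have hsubG : s ∩ v ⊆ G := by
    intro p hp
    refine ⟨hp.1, fun hpu => ?_⟩
    have : p ∈ s ∩ (u ∩ v) := ⟨hp.1, hpu, hp.2⟩
    rw [hempty] at this; exact this
  have hFne : F.Nonempty := hne1.mono hsubF
  have hGne : G.Nonempty := hne2.mono hsubG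
  have hFs : F ⊆ s := diff_subset
  have hGs : G ⊆ s := diff_subset
  have hFG : F ∪ G = s := by
    apply Subset.antisymm (union_subset hFs hGs)
    intro p hp
    by_cases hpv : p ∈ v
    · right; exact hsubG ⟨hp, hpv⟩
    · left; exact ⟨hp, hpv⟩
  have hdisj : Disjoint F G := by
    rw [Set.disjoint_left]
    rintro p ⟨hps, hpv⟩ ⟨_, hpu⟩
    rcases hcover hps with h | h
    · exact hpu h
    · exact hpv h
  obtain ⟨U, hU0, hU1, hUbd⟩ := exists_continuous_zero_one_of_isClosed hFclosed hGclosed hdisj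
  set φ : ℝ × ℝ → ℂ := fun p => Complex.exp (((Real.pi * U p : ℝ) : ℂ) * Complex.I) with hφ
  set ψ : ℝ × ℝ → ℂ := fun p => Complex.exp (-(((Real.pi * U p : ℝ) : ℂ) * Complex.I)) with hψ
  have hUc : Continuous fun p : ℝ × ℝ => (((Real.pi * U p : ℝ) : ℂ) * Complex.I) := by
    have := U.continuous
    fun_prop
  have hφc : Continuous φ := Complex.continuous_exp.comp hUc
  have hψc : Continuous ψ := Complex.continuous_exp.comp hUc.neg
  have heqOn : EqOn φ ψ (A ∩ B) := by
    intro p hp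
    rw [← hs, ← hFG] at hp
    rcases hp with hp | hp
    · have h0 : U p = 0 := hU0 hp
      simp [hφ, hψ, h0]
    · have h1 : U p = 1 := hU1 hp
      simp only [hφ, hψ, h1, mul_one]
      rw [Complex.exp_neg, Complex.exp_pi_mul_I]
      norm_num
  set h : ℝ × ℝ → ℂ := fun p => if p ∈ A then φ p else ψ p with hh
  have hcont : ContinuousOn h R := hABR ▸ aux_glue hA hB hφc hψc heqOn
  have hz : ∀ p ∈ R, h p ≠ 0 := by
    intro p _
    simp only [hh]
    split <;> exact Complex.exp_ne_zero _
  obtain ⟨p₀, hp₀⟩ := hFne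
  obtain ⟨q₀, hq₀⟩ := hGne
  have hp₀R : p₀ ∈ R := hAR (hFs hp₀).1
  obtain ⟨H, hHcont, hHexp⟩ := aux_log hconv hcomp hp₀R hcont hz
  have two_pi_I_ne : (2 * (Real.pi : ℂ) * Complex.I) ≠ 0 :=
    mul_ne_zero (mul_ne_zero two_ne_zero (Complex.ofReal_ne_zero.mpr Real.pi_ne_zero))
      Complex.I_ne_zero
  set α : ℝ × ℝ → ℝ := fun p =>
    ((H p - ((Real.pi * U p : ℝ) : ℂ) * Complex.I) / (2 * (Real.pi : ℂ) * Complex.I)).re with hα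
  set β : ℝ × ℝ → ℝ := fun p =>
    ((H p + ((Real.pi * U p : ℝ) : ℂ) * Complex.I) / (2 * (Real.pi : ℂ) * Complex.I)).re with hβ
  have hαint : ∀ p ∈ A, ∃ k : ℤ, α p = k := by
    intro p hp
    have h1 : Complex.exp (H p) = φ p := by
      rw [hHexp p (hAR hp)]; simp only [hh, if_pos hp]
    have h2 : Complex.exp (H p - ((Real.pi * U p : ℝ) : ℂ) * Complex.I) = 1 := by
      rw [Complex.exp_sub, h1, hφ, div_self (Complex.exp_ne_zero _)]
    obtain ⟨k, hk⟩ := Complex.exp_eq_one_iff.mp h2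
    refine ⟨k, ?_⟩
    rw [hα]
    simp only
    rw [hk, mul_div_cancel_right₀ _ two_pi_I_ne]
    simp
  have hβint : ∀ p ∈ B, ∃ k : ℤ, β p = k := by
    intro p hp
    have h1 : Complex.exp (H p) = ψ p := by
      rw [hHexp p (hBR hp)]
      simp only [hh]
      split
      · exact heqOn ⟨‹p ∈ A›, hp⟩
      · rfl
    have h2 : Complex.exp (H p + ((Real.pi * U p : ℝ) : ℂ) * Complex.I) = 1 := by
      rw [Complex.exp_add, h1, hψ, ← Complex.exp_add]
      simp
    obtain ⟨k, hk⟩ := Complex.exp_eq_one_iff.mp h2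
    refine ⟨k, ?_⟩
    rw [hβ]
    simp only
    rw [hk, mul_div_cancel_right₀ _ two_pi_I_ne]
    simp
  have hcontU : Continuous fun p : ℝ × ℝ => (((Real.pi * U p : ℝ) : ℂ) * Complex.I) := hUc
  have hαcont : ContinuousOn α A := by
    apply Complex.continuous_re.comp_continuousOn
    exact (((hHcont.mono hAR).sub hcontU.continuousOn).div_const _)
  have hβcont : ContinuousOn β B := by
    apply Complex.continuous_re.comp_continuousOn
    exact (((hHcont.mono hBR).add hcontU.continuousOn).div_const _)
  have hαconst : ∀ p ∈ A, ∀ q ∈ A, α p = α q := by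
    intro p hp q hq
    have hsub := aux_int_subsingleton (hAc.image α hαcont)
      (by rintro x ⟨y, hy, rfl⟩; exact hαint y hy)
    exact hsub ⟨p, hp, rfl⟩ ⟨q, hq, rfl⟩
  have hβconst : ∀ p ∈ B, ∀ q ∈ B, β p = β q := by
    intro p hp q hq
    have hsub := aux_int_subsingleton (hBc.image β hβcont)
      (by rintro x ⟨y, hy, rfl⟩; exact hβint y hy)
    exact hsub ⟨p, hp, rfl⟩ ⟨q, hq, rfl⟩
  -- at p₀ : U = 0, so α p₀ = β p₀
  have hU0p : U p₀ = 0 := hU0 hp₀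
  have hαβp₀ : α p₀ = β p₀ := by
    rw [hα, hβ]; simp only [hU0p]; norm_num
  -- at q₀ : U = 1, so β q₀ = α q₀ + 1
  have hU1q : U q₀ = 1 := hU1 hq₀
  have hβαq₀ : β q₀ = α q₀ + 1 := by
    rw [hα, hβ]
    simp only [hU1q, mul_one]
    have hsplit : (H q₀ + ((Real.pi : ℝ) : ℂ) * Complex.I) / (2 * (Real.pi : ℂ) * Complex.I)
        = (H q₀ - ((Real.pi : ℝ) : ℂ) * Complex.I) / (2 * (Real.pi : ℂ) * Complex.I) + 1 := by
      field_simp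
      ring
    rw [hsplit]
    simp
  have e1 : α p₀ = α q₀ := hαconst p₀ (hFs hp₀).1 q₀ (hGs hq₀).1
  have e2 : β p₀ = β q₀ := hβconst p₀ (hFs hp₀).2 q₀ (hGs hq₀).2
  linarith


theorem stmt16 (a b c d δ : ℝ) (hab : a < b) (hδ : 0 < δ) (hδ' : δ < 1 / δ)
    (hsub : Set.Icc δ (1 / δ) ⊆ Set.Ioo c d)
    (f : ℝ × ℝ → ℝ)
    (hf : ContinuousOn f (Set.Icc a b ×ˢ Set.Ioo c d))
    (hneg : ∀ x ∈ Set.Icc a b, ∀ S ∈ Set.Ioo c d, 1 / δ ≤ S → f (x, S) < 0)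
    (hpos : ∀ x ∈ Set.Icc a b, ∀ S ∈ Set.Ioo c d, S ≤ δ → f (x, S) > 0) :
    ∃ 𝒞 : Set (ℝ × ℝ),
      𝒞 ⊆ {p ∈ Set.Icc a b ×ˢ Set.Ioo δ (1 / δ) | f p = 0} ∧
      IsConnected 𝒞 ∧
      (𝒞 ∩ {a} ×ˢ Set.Ioo δ (1 / δ)).Nonempty ∧
      (𝒞 ∩ {b} ×ˢ Set.Ioo δ (1 / δ)).Nonempty := by
  classical
  set e : ℝ := 1 / δ with he
  set R : Set (ℝ × ℝ) := Icc a b ×ˢ Icc δ e with hRdef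
  have hconv : Convex ℝ R := (convex_Icc a b).prod (convex_Icc δ e)
  have hcomp : IsCompact R := isCompact_Icc.prod isCompact_Icc
  have hRclosed : IsClosed R := isClosed_Icc.prod isClosed_Icc
  have hRsub : R ⊆ Icc a b ×ˢ Ioo c d := fun p hp => ⟨hp.1, hsub hp.2⟩
  have hfR : ContinuousOn f R := hf.mono hRsub
  have haa : a ∈ Icc a b := ⟨le_refl a, hab.le⟩
  have hbb : b ∈ Icc a b := ⟨hab.le, le_refl b⟩
  have hδI : δ ∈ Icc δ e := ⟨le_refl δ, hδ'.le⟩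
  have heI : e ∈ Icc δ e := ⟨hδ'.le, le_refl e⟩
  -- sign facts
  have hftop : ∀ p ∈ R, p.2 = e → f p < 0 := by
    intro p hp h2
    have := hneg p.1 hp.1 p.2 (hsub hp.2) (h2 ▸ le_refl e)
    rwa [Prod.mk.eta] at this
  have hfbot : ∀ p ∈ R, p.2 = δ → 0 < f p := by
    intro p hp h2
    have := hpos p.1 hp.1 p.2 (hsub hp.2) (h2 ▸ le_refl δ)
    rwa [Prod.mk.eta] at this
  -- the negative set and the top component B
  set N : Set (ℝ × ℝ) := R ∩ f ⁻¹' Iic 0 with hNdef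
  have hNclosed : IsClosed N := hfR.preimage_isClosed_of_isClosed hRclosed isClosed_Iic
  have hNR : N ⊆ R := inter_subset_left
  have haeR : (a, e) ∈ R := ⟨haa, heI⟩
  have haeN : (a, e) ∈ N := ⟨haeR, le_of_lt (hftop _ haeR rfl)⟩
  set B : Set (ℝ × ℝ) := connectedComponentIn N (a, e) with hBdef
  have hBN : B ⊆ N := connectedComponentIn_subset _ _
  have hBc : IsPreconnected B := isPreconnected_connectedComponentIn
  have haeB : (a, e) ∈ B := mem_connectedComponentIn haeN
  have hBclosed : IsClosed B := by
    apply isClosed_of_closure_subset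
    have h1 : closure B ⊆ N := hNclosed.closure_subset_iff.mpr hBN
    exact hBc.closure.subset_connectedComponentIn (subset_closure haeB) h1
  -- top edge inside B
  have hTB : Icc a b ×ˢ {e} ⊆ B := by
    apply IsPreconnected.subset_connectedComponentIn
      ((convex_Icc a b).prod (convex_singleton e)).isPreconnected
    · exact ⟨haa, rfl⟩
    · intro p hp
      have hpR : p ∈ R := ⟨hp.1, hp.2 ▸ heI⟩
      exact ⟨hpR, le_of_lt (hftop p hpR hp.2)⟩
  -- the complement A and bottom component C
  set A : Set (ℝ × ℝ) := R \ B with hAdef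
  have hArel : A = R ∩ Bᶜ := rfl
  have haδR : (a, δ) ∈ R := ⟨haa, hδI⟩
  have haδA : (a, δ) ∈ A := by
    refine ⟨haδR, fun hmem => ?_⟩
    have := (hBN hmem).2
    have h2 := hfbot _ haδR rfl
    simp only [mem_preimage, mem_Iic] at this
    linarith
  set C : Set (ℝ × ℝ) := connectedComponentIn A (a, δ) with hCdef
  have hCA : C ⊆ A := connectedComponentIn_subset _ _
  have hCc : IsPreconnected C := isPreconnected_connectedComponentIn
  have haδC : (a, δ) ∈ C := mem_connectedComponentIn haδA
  have hCR : C ⊆ R := hCA.trans diff_subset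
  -- bottom edge inside C
  have hBoC : Icc a b ×ˢ {δ} ⊆ C := by
    apply IsPreconnected.subset_connectedComponentIn
      ((convex_Icc a b).prod (convex_singleton δ)).isPreconnected
    · exact ⟨haa, rfl⟩
    · intro p hp
      have hpR : p ∈ R := ⟨hp.1, hp.2 ▸ hδI⟩
      refine ⟨hpR, fun hmem => ?_⟩
      have := (hBN hmem).2
      have h2 := hfbot p hpR hp.2
      simp only [mem_preimage, mem_Iic] at this
      linarith
  -- C is relatively open
  obtain ⟨O, hO, hCO⟩ := aux_relopen_component hconv hBclosed.isOpen_compl hArel (a, δ)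
  rw [← hCdef] at hCO
  -- B' := R \ C is closed, contains B
  set B' : Set (ℝ × ℝ) := R \ C with hB'def
  have hB'closed : IsClosed B' := by
    have : B' = R ∩ Oᶜ := by
      ext z
      constructor
      · rintro ⟨hzR, hzC⟩
        refine ⟨hzR, fun hzO => hzC ?_⟩
        rw [hCO]; exact ⟨hzR, hzO⟩
      · rintro ⟨hzR, hzO⟩
        refine ⟨hzR, fun hzC => hzO ?_⟩
        rw [hCO] at hzC; exact hzC.2
    rw [this]
    exact hRclosed.inter hO.isClosed_compl
  have hBB' : B ⊆ B' := fun p hp => ⟨hNR (hBN hp), fun hpC => (hCA hpC).2 hp⟩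
  -- closure C is disjoint from C-complement components etc.
  have hclC_R : closure C ⊆ R := hRclosed.closure_subset_iff.mpr hCR
  have hclC_avoid : ∀ D : Set (ℝ × ℝ), D ⊆ R → D ∩ C = ∅ → closure D ∩ C = ∅ := by
    intro D hDR hDC
    rw [eq_empty_iff_forall_notMem]
    rintro z ⟨hzcl, hzC⟩
    have hzO : z ∈ O := by rw [hCO] at hzC; exact hzC.2
    obtain ⟨w, hwD, hwO⟩ : (D ∩ O).Nonempty := by
      have := mem_closure_iff.mp hzcl O hO hzO
      exact this.imp fun w hw => ⟨hw.2, hw.1⟩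
    have hwC : w ∈ C := by rw [hCO]; exact ⟨hDR hwD, hwO⟩
    rw [eq_empty_iff_forall_notMem] at hDC
    exact hDC w ⟨hwD, hwC⟩
  -- B' is preconnected
  have hB'c : IsPreconnected B' := by
    apply isPreconnected_of_forall ((a : ℝ), e)
    intro y hy
    by_cases hyB : y ∈ B
    · exact ⟨B, hBB', haeB, hyB, hBc⟩
    · -- y is in another component of A
      have hyA : y ∈ A := ⟨hy.1, hyB⟩
      set D : Set (ℝ × ℝ) := connectedComponentIn A y with hDdef
      have hyD : y ∈ D := mem_connectedComponentIn hyA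
      have hDA : D ⊆ A := connectedComponentIn_subset _ _
      have hDR : D ⊆ R := hDA.trans diff_subset
      have hDc : IsPreconnected D := isPreconnected_connectedComponentIn
      have hDCempty : D ∩ C = ∅ := by
        rw [eq_empty_iff_forall_notMem]
        rintro z ⟨hzD, hzC⟩
        have h1 : connectedComponentIn A y = connectedComponentIn A z :=
          connectedComponentIn_eq hzD
        have h2 : connectedComponentIn A (a, δ) = connectedComponentIn A z :=
          connectedComponentIn_eq hzC
        exact hy.2 (by rw [hCdef, h2, ← h1]; exact hyD)
      have hclD_B : (closure D ∩ B).Nonempty := by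
        by_contra hcontra
        rw [not_nonempty_iff_eq_empty, eq_empty_iff_forall_notMem] at hcontra
        have hclR : closure D ⊆ R := hRclosed.closure_subset_iff.mpr hDR
        have hclA : closure D ⊆ A := fun z hz =>
          ⟨hclR hz, fun hzB => hcontra z ⟨hz, hzB⟩⟩
        have hclD : closure D ⊆ D :=
          hDc.closure.subset_connectedComponentIn (subset_closure hyD) hclA
        have hDclosed : IsClosed D := isClosed_of_closure_subset hclD
        obtain ⟨O2, hO2, hDO2⟩ := aux_relopen_component hconv hBclosed.isOpen_compl hArel y
        rw [← hDdef] at hDO2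
        apply aux_clopen hconv.isPreconnected hO2 hDO2 hDclosed ⟨y, hyD⟩
        refine ⟨(a, δ), haδR, fun hmem => ?_⟩
        rw [eq_empty_iff_forall_notMem] at hDCempty
        exact hDCempty (a, δ) ⟨hmem, haδC⟩
      obtain ⟨w, hwclD, hwB⟩ := hclD_B
      refine ⟨closure D ∪ B, ?_, Or.inr haeB, Or.inl (subset_closure hyD), ?_⟩
      · apply union_subset
        · intro z hz
          refine ⟨hRclosed.closure_subset_iff.mpr hDR hz, fun hzC => ?_⟩
          have := hclC_avoid D hDR hDCempty
          rw [eq_empty_iff_forall_notMem] at this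
          exact this z ⟨hz, hzC⟩
        · exact hBB'
      · exact IsPreconnected.union w hwclD hwB hDc.closure hBc
  -- the candidate set W
  set W : Set (ℝ × ℝ) := closure C ∩ B' with hWdef
  have hWC : W = closure C \ C := by
    ext z
    constructor
    · rintro ⟨hz1, _, hz3⟩; exact ⟨hz1, hz3⟩
    · rintro ⟨hz1, hz2⟩; exact ⟨hz1, hclC_R hz1, hz2⟩
  -- every point of W is a zero of f
  have hWzero : ∀ p ∈ W, f p = 0 := by
    intro p hp
    rw [hWC] at hp
    obtain ⟨hpcl, hpC⟩ := hp
    have hpR : p ∈ R := hclC_R hpcl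
    rcases lt_trichotomy (f p) 0 with hlt | heq0 | hgt
    · -- f p < 0 : p has a neighborhood inside N; connects C to B or stays in A
      exfalso
      have h1 : f ⁻¹' Iio 0 ∈ nhdsWithin p R := hfR p hpR (Iio_mem_nhds hlt)
      obtain ⟨O3, hO3open, hpO3, hO3sub⟩ := mem_nhdsWithin.mp h1
      obtain ⟨ε, hε, hball⟩ := Metric.isOpen_iff.mp hO3open p hpO3
      set Wc : Set (ℝ × ℝ) := R ∩ Metric.ball p ε with hWcdef
      have hWcN : Wc ⊆ N := by
        rintro q ⟨hqR, hqball⟩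
        have h2 := hO3sub ⟨hball hqball, hqR⟩
        simp only [mem_preimage, mem_Iio] at h2
        exact ⟨hqR, by simp only [mem_preimage, mem_Iic]; linarith⟩
      have hWcconn : IsPreconnected Wc := (hconv.inter (convex_ball p ε)).isPreconnected
      obtain ⟨w, hwC, hwball⟩ : (C ∩ Metric.ball p ε).Nonempty := by
        obtain ⟨w, hwC, hwd⟩ := Metric.mem_closure_iff.mp hpcl ε hε
        exact ⟨w, hwC, by rwa [Metric.mem_ball, dist_comm]⟩
      have hwWc : w ∈ Wc := ⟨hCR hwC, hwball⟩
      by_cases hWcB : (Wc ∩ B).Nonempty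
      · -- Wc ⊆ B, contradicting w ∈ C ⊆ A
        obtain ⟨z, hzWc, hzB⟩ := hWcB
        have h2 : Wc ⊆ connectedComponentIn N z :=
          hWcconn.subset_connectedComponentIn hzWc hWcN
        have h3 : connectedComponentIn N (a, e) = connectedComponentIn N z :=
          connectedComponentIn_eq hzB
        have : w ∈ B := by rw [hBdef, h3]; exact h2 hwWc
        exact (hCA hwC).2 this
      · -- Wc ⊆ A, so Wc ⊆ C and p ∈ C, contradiction
        rw [not_nonempty_iff_eq_empty, eq_empty_iff_forall_notMem] at hWcB
        have hWcA : Wc ⊆ A := fun z hz => ⟨hz.1, fun hzB => hWcB z ⟨hz, hzB⟩⟩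
        have h2 : Wc ⊆ connectedComponentIn A w :=
          hWcconn.subset_connectedComponentIn hwWc hWcA
        have h3 : connectedComponentIn A (a, δ) = connectedComponentIn A w :=
          connectedComponentIn_eq hwC
        have : p ∈ C := by
          rw [hCdef, h3]
          exact h2 ⟨hpR, Metric.mem_ball_self hε⟩
        exact hpC this
    · exact heq0
    · -- f p > 0 : a neighborhood avoids N hence B; stays in A, so p ∈ C
      exfalso
      have h1 : f ⁻¹' Ioi 0 ∈ nhdsWithin p R := hfR p hpR (Ioi_mem_nhds hgt)
      obtain ⟨O3, hO3open, hpO3, hO3sub⟩ := mem_nhdsWithin.mp h1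
      obtain ⟨ε, hε, hball⟩ := Metric.isOpen_iff.mp hO3open p hpO3
      set Wc : Set (ℝ × ℝ) := R ∩ Metric.ball p ε with hWcdef
      have hWcA : Wc ⊆ A := by
        rintro q ⟨hqR, hqball⟩
        refine ⟨hqR, fun hqB => ?_⟩
        have := (hBN hqB).2
        simp only [mem_preimage, mem_Iic] at this
        have h2 := hO3sub ⟨hball hqball, hqR⟩
        simp only [mem_preimage, mem_Ioi] at h2
        linarith
      have hWcconn : IsPreconnected Wc := (hconv.inter (convex_ball p ε)).isPreconnected
      obtain ⟨w, hwC, hwball⟩ : (C ∩ Metric.ball p ε).Nonempty := by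
        obtain ⟨w, hwC, hwd⟩ := Metric.mem_closure_iff.mp hpcl ε hε
        exact ⟨w, hwC, by rwa [Metric.mem_ball, dist_comm]⟩
      have hwWc : w ∈ Wc := ⟨hCR hwC, hwball⟩
      have h2 : Wc ⊆ connectedComponentIn A w :=
        hWcconn.subset_connectedComponentIn hwWc hWcA
      have h3 : connectedComponentIn A (a, δ) = connectedComponentIn A w :=
        connectedComponentIn_eq hwC
      have : p ∈ C := by
        rw [hCdef, h3]
        exact h2 ⟨hpR, Metric.mem_ball_self hε⟩
      exact hpC this
  -- W is contained in the open strip and consists of zeros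
  have hWmem : ∀ p ∈ W, p ∈ Icc a b ×ˢ Ioo δ e ∧ f p = 0 := by
    intro p hp
    have hz := hWzero p hp
    have hpR : p ∈ R := hclC_R hp.1
    have h2 : p.2 ≠ δ := fun h => by have := hfbot p hpR h; linarith
    have h3 : p.2 ≠ e := fun h => by have := hftop p hpR h; linarith
    exact ⟨⟨hpR.1, lt_of_le_of_ne hpR.2.1 (Ne.symm h2), lt_of_le_of_ne hpR.2.2 h3⟩, hz⟩
  -- W nonempty
  have hWne : W.Nonempty := by
    by_contra hcon
    rw [not_nonempty_iff_eq_empty, hWC] at hcon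
    have hclsub : closure C ⊆ C := by
      intro z hz
      by_contra hzC
      rw [eq_empty_iff_forall_notMem] at hcon
      exact hcon z ⟨hz, hzC⟩
    have hCclosed : IsClosed C := isClosed_of_closure_subset hclsub
    exact aux_clopen hconv.isPreconnected hO hCO hCclosed ⟨(a, δ), haδC⟩
      ⟨(a, e), haeR, fun hmem => (hCA hmem).2 haeB⟩
  -- W preconnected via unicoherence
  have hunion : closure C ∪ B' = R := by
    apply Subset.antisymm (union_subset hclC_R diff_subset)
    intro p hpR
    by_cases hpC : p ∈ C
    · exact Or.inl (subset_closure hpC)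
    · exact Or.inr ⟨hpR, hpC⟩
  have hWconn : IsPreconnected W :=
    aux_unicoherence hconv hcomp isClosed_closure hB'closed hCc.closure hB'c hunion
  -- touching the lateral edges
  have hedge : ∀ x0 ∈ Icc a b, (x0, δ) ∈ C → (x0, e) ∈ B →
      (W ∩ {x0} ×ˢ Ioo δ e).Nonempty := by
    intro x0 hx0 hbot htop
    set L : Set (ℝ × ℝ) := {x0} ×ˢ Icc δ e with hLdef
    have hLR : L ⊆ R := fun p hp => ⟨mem_singleton_iff.mp hp.1 ▸ hx0, hp.2⟩
    have hLW : (L ∩ W).Nonempty := by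
      by_contra hcon
      rw [not_nonempty_iff_eq_empty, eq_empty_iff_forall_notMem] at hcon
      have hLconn : IsPreconnected L :=
        ((convex_singleton x0).prod (convex_Icc δ e)).isPreconnected
      have htopW : (x0, e) ∉ C := fun hmem => (hCA hmem).2 htop
      obtain ⟨z, hzL, hzO, hzcl⟩ := hLconn O (closure C)ᶜ hO isClosed_closure.isOpen_compl
        (by
          intro p hpL
          by_cases hpC : p ∈ C
          · left; rw [hCO] at hpC; exact hpC.2
          · by_cases hpcl : p ∈ closure C
            · exact absurd ⟨hpL, by rw [hWC]; exact ⟨hpcl, hpC⟩⟩ (hcon p)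
            · exact Or.inr hpcl)
        ⟨(x0, δ), ⟨rfl, hδI⟩, by
          have := hbot; rw [hCO] at this; exact this.2⟩
        ⟨(x0, e), ⟨rfl, heI⟩, fun hmem =>
          hcon (x0, e) ⟨⟨rfl, heI⟩, by rw [hWC]; exact ⟨hmem, htopW⟩⟩⟩
      have : z ∈ C := by rw [hCO]; exact ⟨hLR hzL, hzO⟩
      exact hzcl (subset_closure this)
    obtain ⟨z, hzL, hzW⟩ := hLW
    exact ⟨z, hzW, hzL.1, ((hWmem z hzW).1).2⟩
  refine ⟨W, ?_, ⟨hWne, hWconn⟩, ?_, ?_⟩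
  · intro p hp
    obtain ⟨hmem, hz⟩ := hWmem p hp
    exact ⟨hmem, hz⟩
  · exact hedge a haa haδC haeB
  · exact hedge b hbb (hBoC ⟨hbb, rfl⟩) (hTB ⟨hbb, rfl⟩)
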